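/- Let a, b, c, d ∈ R = ℂ[s,u,t,v] be bihomogeneous of bidegree (m,n) with m,n ≥ 1, and let Q₁, …, Q_r be elements of Syz(a², ab, ac, ad, b², bc, bd, c², cd, d²) whose ten components are bihomogeneous of bidegree (m−1,n−1), with r = mn. For each i and each pair (j,k) with 0 ≤ j ≤ m−1, 0 ≤ k ≤ n−1, let Q_{i,jk}(x,y,z,w) be the quadratic form in ℂ[x,y,z,w] whose coefficient on each of the ten quadratic monomials x², xy, xz, xw, y², yz, yw, z², zw, w² is the coefficient of the monomial s^j u^{m−1−j} t^k v^{n−1−k} in the corresponding component of Q_i. Let M be the mn × mn matrix with rows indexed by i and columns indexed by (j,k) and entries Q_{i,jk}. Then det M lies in the kernel of the ℂ-algebra homomorphism ℂ[x,y,z,w] → R sending x ↦ a, y ↦ b, z ↦ c, w ↦ d. -/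
import Mathlib


open MvPolynomial

/-- In `R = ℂ[s,u,t,v]` (variables `0 = s`, `1 = u`, `2 = t`, `3 = v`), a polynomial
is bihomogeneous of bidegree `(m,n)` if every monomial in its support has degree `m`
in `s,u` and degree `n` in `t,v`. -/
def IsBihomogeneous (f : MvPolynomial (Fin 4) ℂ) (m n : ℕ) : Prop :=
  ∀ d ∈ f.support, d 0 + d 1 = m ∧ d 2 + d 3 = n

/-- The ten products `a², ab, ac, ad, b², bc, bd, c², cd, d²`. -/
noncomputable def tenProducts (a b c d : MvPolynomial (Fin 4) ℂ) :
    Fin 10 → MvPolynomial (Fin 4) ℂ :=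
  ![a ^ 2, a * b, a * c, a * d, b ^ 2, b * c, b * d, c ^ 2, c * d, d ^ 2]

/-- The ten quadratic monomials `x², xy, xz, xw, y², yz, yw, z², zw, w²` in
`ℂ[x,y,z,w]` (variables `0 = x`, `1 = y`, `2 = z`, `3 = w`). -/
noncomputable def quadMonomials : Fin 10 → MvPolynomial (Fin 4) ℂ :=
  ![X 0 ^ 2, X 0 * X 1, X 0 * X 2, X 0 * X 3, X 1 ^ 2, X 1 * X 2, X 1 * X 3,
    X 2 ^ 2, X 2 * X 3, X 3 ^ 2]

/-- The exponent of the monomial `s^j u^{m−1−j} t^k v^{n−1−k}`. -/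
noncomputable def bidegExponent (m n j k : ℕ) : Fin 4 →₀ ℕ :=
  Finsupp.single 0 j + Finsupp.single 1 (m - 1 - j) +
    Finsupp.single 2 k + Finsupp.single 3 (n - 1 - k)

/-- The quadratic form `Q_{i,jk}(x,y,z,w)` obtained from a moving quadric `Qi`
(a 10-tuple of coefficients) by extracting the coefficient of
`s^j u^{m−1−j} t^k v^{n−1−k}` from each component. -/
noncomputable def movingQuadricForm (m n : ℕ)
    (Qi : Fin 10 → MvPolynomial (Fin 4) ℂ) (j k : ℕ) : MvPolynomial (Fin 4) ℂ :=
  ∑ l : Fin 10, C (coeff (bidegExponent m n j k) (Qi l)) * quadMonomials l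

/-- The `mn × mn` matrix `M = (Q_{i,jk})`, with rows indexed by `i` and columns
indexed by the pairs `(j,k)` via `finProdFinEquiv`. -/
noncomputable def movingQuadricMatrix (m n : ℕ)
    (Q : Fin (m * n) → (Fin 10 → MvPolynomial (Fin 4) ℂ)) :
    Matrix (Fin (m * n)) (Fin (m * n)) (MvPolynomial (Fin 4) ℂ) :=
  Matrix.of fun i jk =>
    movingQuadricForm m n (Q i) ((finProdFinEquiv.symm jk).1 : ℕ)
      ((finProdFinEquiv.symm jk).2 : ℕ)

/-- For `mn` moving quadrics of bidegree `(m−1,n−1)` following the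
parametrization `(a,b,c,d)`, the determinant of the `mn × mn` matrix `M = (Q_{i,jk})`
lies in the kernel of `ℂ[x,y,z,w] → R`, `x ↦ a, y ↦ b, z ↦ c, w ↦ d`. -/
lemma bidegExponent_apply0 (m n j k : ℕ) : bidegExponent m n j k 0 = j := by
  simp [bidegExponent, Finsupp.single_apply]

lemma bidegExponent_apply2 (m n j k : ℕ) : bidegExponent m n j k 2 = k := by
  simp [bidegExponent, Finsupp.single_apply]

lemma bihom_expand (m n : ℕ) (hm : 1 ≤ m) (hn : 1 ≤ n)
    (f : MvPolynomial (Fin 4) ℂ) (hf : IsBihomogeneous f (m - 1) (n - 1)) :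
    ∑ p : Fin m × Fin n,
      monomial (bidegExponent m n p.1 p.2) (coeff (bidegExponent m n p.1 p.2) f) = f := by
  classical
  set e : Fin m × Fin n → (Fin 4 →₀ ℕ) := fun p => bidegExponent m n p.1 p.2 with he
  have hinj : ∀ p ∈ (Finset.univ : Finset (Fin m × Fin n)), ∀ q ∈ Finset.univ,
      e p = e q → p = q := by
    intro p _ q _ h
    have h0 : (p.1 : ℕ) = q.1 := by
      have := DFunLike.congr_fun h 0
      simpa [he, bidegExponent_apply0] using this
    have h2 : (p.2 : ℕ) = q.2 := by
      have := DFunLike.congr_fun h 2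
      simpa [he, bidegExponent_apply2] using this
    exact Prod.ext (Fin.ext h0) (Fin.ext h2)
  have hsub : f.support ⊆ Finset.image e Finset.univ := by
    intro d hd
    obtain ⟨h1, h2⟩ := hf d hd
    refine Finset.mem_image.2 ⟨(⟨d 0, by omega⟩, ⟨d 2, by omega⟩), Finset.mem_univ _, ?_⟩
    ext i
    fin_cases i <;> simp [he, bidegExponent, Finsupp.single_apply] <;> omega
  calc ∑ p : Fin m × Fin n, monomial (e p) (coeff (e p) f)
      = ∑ d ∈ Finset.image e Finset.univ, monomial d (coeff d f) :=
        (Finset.sum_image (f := fun e => monomial e (coeff e f)) hinj).symm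
    _ = ∑ d ∈ f.support, monomial d (coeff d f) := by
        refine (Finset.sum_subset hsub ?_).symm
        intro d _ hd
        rw [MvPolynomial.notMem_support_iff.mp hd, map_zero]
    _ = f := support_sum_monomial_coeff f

theorem det_moving_quadrics_in_kernel (m n : ℕ) (hm : 1 ≤ m) (hn : 1 ≤ n)
    (a b c d : MvPolynomial (Fin 4) ℂ)
    (ha : IsBihomogeneous a m n) (hb : IsBihomogeneous b m n)
    (hc : IsBihomogeneous c m n) (hd : IsBihomogeneous d m n)
    (Q : Fin (m * n) → (Fin 10 → MvPolynomial (Fin 4) ℂ))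
    (hQdeg : ∀ i l, IsBihomogeneous (Q i l) (m - 1) (n - 1))
    (hQsyz : ∀ i, ∑ l, Q i l * tenProducts a b c d l = 0) :
    (movingQuadricMatrix m n Q).det ∈
      RingHom.ker (MvPolynomial.aeval (![a, b, c, d] : Fin 4 → MvPolynomial (Fin 4) ℂ)
        : MvPolynomial (Fin 4) ℂ →ₐ[ℂ] MvPolynomial (Fin 4) ℂ) := by
  classical
  set φ : MvPolynomial (Fin 4) ℂ →ₐ[ℂ] MvPolynomial (Fin 4) ℂ :=
    MvPolynomial.aeval (![a, b, c, d] : Fin 4 → MvPolynomial (Fin 4) ℂ) with hφ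
  rw [RingHom.mem_ker]
  show φ (movingQuadricMatrix m n Q).det = 0
  have hdet : φ (movingQuadricMatrix m n Q).det
      = ((movingQuadricMatrix m n Q).map φ).det :=
    RingHom.map_det φ.toRingHom _
  rw [hdet]
  set N := (movingQuadricMatrix m n Q).map φ with hN
  set v : Fin (m * n) → MvPolynomial (Fin 4) ℂ := fun jk =>
    monomial (bidegExponent m n ((finProdFinEquiv.symm jk).1 : ℕ)
      ((finProdFinEquiv.symm jk).2 : ℕ)) 1 with hv
  have hquad : ∀ l : Fin 10, φ (quadMonomials l) = tenProducts a b c d l := by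
    intro l
    have h0 : φ (X 0) = a := by simp [hφ]
    have h1 : φ (X 1) = b := by simp [hφ]
    have h2 : φ (X 2) = c := by simp [hφ]
    have h3 : φ (X 3) = d := by simp [hφ]
    fin_cases l
    · show φ (X 0 ^ 2) = a ^ 2; rw [map_pow, h0]
    · show φ (X 0 * X 1) = a * b; rw [map_mul, h0, h1]
    · show φ (X 0 * X 2) = a * c; rw [map_mul, h0, h2]
    · show φ (X 0 * X 3) = a * d; rw [map_mul, h0, h3]
    · show φ (X 1 ^ 2) = b ^ 2; rw [map_pow, h1]
    · show φ (X 1 * X 2) = b * c; rw [map_mul, h1, h2]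
    · show φ (X 1 * X 3) = b * d; rw [map_mul, h1, h3]
    · show φ (X 2 ^ 2) = c ^ 2; rw [map_pow, h2]
    · show φ (X 2 * X 3) = c * d; rw [map_mul, h2, h3]
    · show φ (X 3 ^ 2) = d ^ 2; rw [map_pow, h3]
  have hNe : ∀ i jk, N i jk = ∑ l : Fin 10,
      C (coeff (bidegExponent m n ((finProdFinEquiv.symm jk).1 : ℕ)
        ((finProdFinEquiv.symm jk).2 : ℕ)) (Q i l)) * tenProducts a b c d l := by
    intro i jk
    rw [hN]
    simp only [Matrix.map_apply, movingQuadricMatrix, Matrix.of_apply, movingQuadricForm,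
      map_sum, map_mul]
    refine Finset.sum_congr rfl fun l _ => ?_
    rw [hquad l]
    congr 1
    simp [hφ, algebraMap_eq]
  have hmv : N.mulVec v = 0 := by
    funext i
    rw [Pi.zero_apply]
    have expand : ∀ l : Fin 10,
        ∑ p : Fin m × Fin n,
          monomial (bidegExponent m n p.1 p.2) (coeff (bidegExponent m n p.1 p.2) (Q i l))
          = Q i l := fun l => bihom_expand m n hm hn (Q i l) (hQdeg i l)
    have : N.mulVec v i = ∑ jk, N i jk * v jk := by
      simp [Matrix.mulVec, dotProduct]
    rw [this]
    have step1 : ∀ jk, N i jk * v jk = ∑ l : Fin 10,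
        tenProducts a b c d l *
          monomial (bidegExponent m n ((finProdFinEquiv.symm jk).1 : ℕ)
            ((finProdFinEquiv.symm jk).2 : ℕ)) (coeff (bidegExponent m n
              ((finProdFinEquiv.symm jk).1 : ℕ) ((finProdFinEquiv.symm jk).2 : ℕ)) (Q i l)) := by
      intro jk
      rw [hNe i jk, Finset.sum_mul]
      refine Finset.sum_congr rfl fun l _ => ?_
      rw [hv]
      ring_nf
      rw [mul_comm (C _) (tenProducts a b c d l), mul_assoc]
      congr 1
      rw [MvPolynomial.C_mul_monomial, mul_one]
    simp only [step1]
    rw [Finset.sum_comm]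
    have conv1 : ∀ l : Fin 10,
        (∑ jk : Fin (m * n),
          tenProducts a b c d l *
            monomial (bidegExponent m n ((finProdFinEquiv.symm jk).1 : ℕ)
              ((finProdFinEquiv.symm jk).2 : ℕ)) (coeff (bidegExponent m n
                ((finProdFinEquiv.symm jk).1 : ℕ) ((finProdFinEquiv.symm jk).2 : ℕ)) (Q i l)))
          = tenProducts a b c d l * Q i l := by
      intro l
      rw [← Finset.mul_sum]
      congr 1
      conv_rhs => rw [← expand l]
      exact Equiv.sum_comp finProdFinEquiv.symm (fun p : Fin m × Fin n =>
        monomial (bidegExponent m n p.1 p.2) (coeff (bidegExponent m n p.1 p.2) (Q i l)))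
    simp only [conv1]
    rw [show (∑ l : Fin 10, tenProducts a b c d l * Q i l)
        = ∑ l : Fin 10, Q i l * tenProducts a b c d l from
      Finset.sum_congr rfl fun l _ => mul_comm _ _]
    exact hQsyz i
  have hvne : v ≠ 0 := by
    have hpos : 0 < m * n := Nat.mul_pos hm hn
    intro hcon
    have h := congrFun hcon ⟨0, hpos⟩
    simp only [hv, Pi.zero_apply] at h
    exact one_ne_zero ((MvPolynomial.monomial_eq_zero).mp h)
  exact (Matrix.exists_mulVec_eq_zero_iff).mp ⟨v, hvne, hmv⟩
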